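/- arXiv:1011.5496 — 5 statements merged into one kernel-verified Lean document; each statement's English description precedes it below -/
import Mathlib

section
/- Suppose p x y > 0 for all x ∈ 𝒳₁ and y ∈ 𝒳₂ (full support). Then any two distinct maximal independent sets W₁ and W₂ of the characteristic graph G_{X₁} are disjoint: W₁ ∩ W₂ = ∅. -/
/-- The characteristic graph `G_{X₁}` of `X₁` with respect to `X₂`, the joint weights `p`,
and the function `f`. -/
def charGraph {X1 X2 Z : Type*} (f : X1 → X2 → Z) (p : X1 → X2 → ℝ) : SimpleGraph X1 where
  Adj a b := a ≠ b ∧ ∃ y, 0 < p a y ∧ 0 < p b y ∧ f a y ≠ f b y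
  symm := by
    constructor
    rintro a b ⟨hab, y, h1, h2, h3⟩
    exact ⟨hab.symm, y, h2, h1, h3.symm⟩
  loopless := by
    constructor
    rintro a ⟨h, -⟩
    exact h rfl

/-- `W` is an independent set of the simple graph `G`. -/
def IsIndepSetOn {V : Type*} (G : SimpleGraph V) (W : Set V) : Prop :=
  ∀ a ∈ W, ∀ b ∈ W, ¬ G.Adj a b

/-- `W` is a maximal independent set of the simple graph `G`: it is independent and is not a
proper subset of any independent set. -/
def IsMaxIndepSet {V : Type*} (G : SimpleGraph V) (W : Set V) : Prop :=
  IsIndepSetOn G W ∧ ∀ W' : Set V, IsIndepSetOn G W' → W ⊆ W' → W' = W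

/-- Under the full-support hypothesis, two distinct maximal independent sets of the
characteristic graph `G_{X₁}` are disjoint. -/
theorem stmt1 {X1 X2 Z : Type*} [Fintype X1] [Nonempty X1] [Fintype X2] [Nonempty X2]
    (f : X1 → X2 → Z) (p : X1 → X2 → ℝ) (hp : ∀ x y, 0 < p x y)
    (W₁ W₂ : Set X1) (hW₁ : IsMaxIndepSet (charGraph f p) W₁)
    (hW₂ : IsMaxIndepSet (charGraph f p) W₂) (hne : W₁ ≠ W₂) :
    W₁ ∩ W₂ = ∅ := by
  by_contra h
  obtain ⟨a, ha1, ha2⟩ := Set.nonempty_iff_ne_empty.mpr h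
  have key : ∀ W : Set X1, IsIndepSetOn (charGraph f p) W → a ∈ W →
      ∀ b ∈ W, ∀ y, f b y = f a y := by
    intro W hW haW b hb y
    by_contra hfy
    exact hW b hb a haW ⟨fun hba => hfy (hba ▸ rfl), y, hp b y, hp a y, hfy⟩
  have hind : IsIndepSetOn (charGraph f p) (W₁ ∪ W₂) := by
    rintro b hb c hc ⟨hbc, y, -, -, hfy⟩
    have hbf : f b y = f a y := by
      rcases hb with hb | hb
      · exact key W₁ hW₁.1 ha1 b hb y
      · exact key W₂ hW₂.1 ha2 b hb y
    have hcf : f c y = f a y := by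
      rcases hc with hc | hc
      · exact key W₁ hW₁.1 ha1 c hc y
      · exact key W₂ hW₂.1 ha2 c hc y
    exact hfy (hbf.trans hcf.symm)
  have h1 := hW₁.2 _ hind Set.subset_union_left
  have h2 := hW₂.2 _ hind Set.subset_union_right
  exact hne (h1 ▸ h2)
end

section
/- Suppose p x y > 0 for all x ∈ 𝒳₁ and y ∈ 𝒳₂ (full support). Then any two distinct maximal independent sets W₁ and W₂ of the characteristic graph G_{X₁} are fully connected to each other: every vertex of W₁ is adjacent in G_{X₁} to every vertex of W₂. -/
/-- Under the full-support hypothesis, any two distinct maximal independent sets of the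
characteristic graph `G_{X₁}` are fully connected to each other. -/
theorem stmt2 {X1 X2 Z : Type*} [Fintype X1] [Nonempty X1] [Fintype X2] [Nonempty X2]
    (f : X1 → X2 → Z) (p : X1 → X2 → ℝ) (hp : ∀ x y, 0 < p x y)
    (W₁ W₂ : Set X1) (hW₁ : IsMaxIndepSet (charGraph f p) W₁)
    (hW₂ : IsMaxIndepSet (charGraph f p) W₂) (hne : W₁ ≠ W₂) :
    ∀ a ∈ W₁, ∀ b ∈ W₂, (charGraph f p).Adj a b := by
  -- non-adjacency gives equal rows
  have key : ∀ a b : X1, ¬ (charGraph f p).Adj a b → ∀ y, f a y = f b y := by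
    intro a b h y
    by_cases hab : a = b
    · rw [hab]
    · by_contra hf
      exact h ⟨hab, y, hp a y, hp b y, hf⟩
  intro a ha b hb
  by_contra hadj
  have hab : ∀ y, f a y = f b y := key a b hadj
  -- W₁ ∪ {b} is independent
  have hrow : ∀ c ∈ W₁, ∀ y, f c y = f b y := by
    intro c hc y
    have := key c a (hW₁.1 c hc a ha) y
    rw [this, hab y]
  have hind : IsIndepSetOn (charGraph f p) (insert b W₁) := by
    rintro c hc d hd ⟨hcd, y, -, -, hf⟩
    apply hf
    rcases hc with rfl | hc <;> rcases hd with rfl | hd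
    · rfl
    · rw [(hrow d hd y)]
    · rw [(hrow c hc y)]
    · rw [hrow c hc y, hrow d hd y]
  have hbW₁ : b ∈ W₁ := by
    have := hW₁.2 _ hind (Set.subset_insert b W₁)
    rw [← this]; exact Set.mem_insert b W₁
  -- now all rows in W₁ and W₂ equal f b, so W₁ ∪ W₂ independent
  have hrow2 : ∀ c ∈ W₂, ∀ y, f c y = f b y := fun c hc y =>
    key c b (hW₂.1 c hc b hb) y
  have hindU : IsIndepSetOn (charGraph f p) (W₁ ∪ W₂) := by
    rintro c hc d hd ⟨hcd, y, -, -, hf⟩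
    apply hf
    rcases hc with hc | hc <;> rcases hd with hd | hd <;>
      first
        | rw [hrow c hc y, hrow d hd y]
        | rw [hrow c hc y, hrow2 d hd y]
        | rw [hrow2 c hc y, hrow d hd y]
        | rw [hrow2 c hc y, hrow2 d hd y]
  have h1 := hW₁.2 _ hindU Set.subset_union_left
  have h2 := hW₂.2 _ hindU Set.subset_union_right
  exact hne (h1 ▸ h2)
end

section
/- Suppose p x y > 0 for all x ∈ 𝒳₁ and y ∈ 𝒳₂ (full support), and let q : 𝒳₁ → ℝ be the marginal weights q a = ∑_{y ∈ 𝒳₂} p a y (so q a > 0 for all a). Let κ : 𝒳₁ → Finset 𝒳₁ send each vertex a to its non-adjacency class κ a = {b | b = a or a and b are non-adjacent in G_{X₁}} (by the full-support structure theorem these classes are exactly the maximal independent sets of G_{X₁}, and κ is a proper coloring of G_{X₁}). Then κ is a minimum entropy coloring: for every finite type C and every proper coloring c : 𝒳₁ → C of G_{X₁}, H(c) ≥ H(κ). -/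
/-- The entropy of a map `c : V → C` when the vertices of `V` carry weights `q`:
`H(c) = ∑_σ negMulLog (∑_{v : c v = σ} q v)`. -/
noncomputable def colorEntropy {V C : Type*} [Fintype V] [Fintype C] [DecidableEq C]
    (q : V → ℝ) (c : V → C) : ℝ :=
  ∑ σ : C, Real.negMulLog (∑ v : V, if c v = σ then q v else 0)

open Classical in
/-- `κ` sends each vertex `a` to its non-adjacency class
`κ a = {b | b = a ∨ ¬ a ~ b}` in the characteristic graph. -/
noncomputable def kappa {X1 X2 Z : Type*} [Fintype X1]
    (f : X1 → X2 → Z) (p : X1 → X2 → ℝ) (a : X1) : Finset X1 :=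
  Finset.univ.filter fun b => b = a ∨ ¬ (charGraph f p).Adj a b

lemma negMulLog_add_le' {s t : ℝ} (hs : 0 ≤ s) (ht : 0 ≤ t) :
    Real.negMulLog (s + t) ≤ Real.negMulLog s + Real.negMulLog t := by
  simp only [Real.negMulLog, neg_mul, neg_add_rev]
  have h1 : s * Real.log s ≤ s * Real.log (s + t) := by
    rcases eq_or_lt_of_le hs with h | h
    · simp [← h]
    · exact mul_le_mul_of_nonneg_left (Real.log_le_log h (by linarith)) hs
  have h2 : t * Real.log t ≤ t * Real.log (s + t) := by
    rcases eq_or_lt_of_le ht with h | h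
    · simp [← h]
    · exact mul_le_mul_of_nonneg_left (Real.log_le_log h (by linarith)) ht
  nlinarith [h1, h2]

lemma negMulLog_sum_le' {ι : Type*} (s : Finset ι) (w : ι → ℝ) (hw : ∀ i ∈ s, 0 ≤ w i) :
    Real.negMulLog (∑ i ∈ s, w i) ≤ ∑ i ∈ s, Real.negMulLog (w i) := by
  induction s using Finset.cons_induction with
  | empty => simp
  | cons a s ha ih =>
    rw [Finset.sum_cons, Finset.sum_cons]
    calc Real.negMulLog (w a + ∑ i ∈ s, w i)
        ≤ Real.negMulLog (w a) + Real.negMulLog (∑ i ∈ s, w i) :=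
          negMulLog_add_le' (hw a (Finset.mem_cons_self a s))
            (Finset.sum_nonneg fun i hi => hw i (Finset.mem_cons_of_mem hi))
      _ ≤ _ := by
          gcongr
          exact ih fun i hi => hw i (Finset.mem_cons_of_mem hi)

/-- Under the full-support hypothesis, the non-adjacency-class map `κ` is a proper coloring of
the characteristic graph `G_{X₁}` and it has minimum entropy among all proper colorings, with
respect to the marginal weights `q a = ∑ y, p a y`. -/
theorem stmt3 {X1 X2 Z : Type*} [Fintype X1] [Nonempty X1] [DecidableEq X1]
    [Fintype X2] [Nonempty X2]
    (f : X1 → X2 → Z) (p : X1 → X2 → ℝ) (hp : ∀ x y, 0 < p x y)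
    (q : X1 → ℝ) (hq : ∀ a, q a = ∑ y : X2, p a y) :
    (∀ a b, (charGraph f p).Adj a b → kappa f p a ≠ kappa f p b) ∧
    ∀ (C : Type) [Fintype C] [DecidableEq C] (c : X1 → C),
      (∀ a b, (charGraph f p).Adj a b → c a ≠ c b) →
      colorEntropy q c ≥ colorEntropy q (kappa f p) := by
  classical
  have hq0 : ∀ a, 0 ≤ q a := fun a => by
    rw [hq a]; exact Finset.sum_nonneg fun y _ => (hp a y).le
  have hadj : ∀ a b, (charGraph f p).Adj a b ↔ a ≠ b ∧ ∃ y, f a y ≠ f b y := by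
    intro a b
    constructor
    · rintro ⟨hab, y, _, _, h⟩; exact ⟨hab, y, h⟩
    · rintro ⟨hab, y, h⟩; exact ⟨hab, y, hp a y, hp b y, h⟩
  have hmem : ∀ a b, b ∈ kappa f p a ↔ ∀ y, f a y = f b y := by
    intro a b
    simp only [kappa, Finset.mem_filter, Finset.mem_univ, true_and, hadj]
    constructor
    · rintro (rfl | h)
      · intro y; rfl
      · intro y
        by_contra hy
        rcases eq_or_ne a b with rfl | hab
        · exact hy rfl
        · exact h ⟨hab, y, hy⟩
    · intro h
      right
      rintro ⟨-, y, hy⟩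
      exact hy (h y)
  have hkeq : ∀ a b, (∀ y, f a y = f b y) → kappa f p a = kappa f p b := by
    intro a b h
    ext v
    rw [hmem, hmem]
    constructor <;> intro hv y
    · exact ((h y).symm).trans (hv y)
    · exact (h y).trans (hv y)
  constructor
  · intro a b hab hk
    rcases (hadj a b).1 hab with ⟨_, y, hy⟩
    have hb : b ∈ kappa f p a := hk ▸ ((hmem b b).2 fun y => rfl)
    exact hy ((hmem a b).1 hb y)
  · intro C _ _ c hc
    have hrefine : ∀ a b, c a = c b → kappa f p a = kappa f p b := by
      intro a b hcab
      rcases eq_or_ne a b with rfl | hne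
      · rfl
      apply hkeq
      intro y
      by_contra hy
      exact hc a b ((hadj a b).2 ⟨hne, y, hy⟩) hcab
    set g : C → Finset X1 := fun σ =>
      if h : ∃ v, c v = σ then kappa f p h.choose else kappa f p (Classical.arbitrary X1)
      with hg
    have hgc : ∀ v, g (c v) = kappa f p v := by
      intro v
      have hex : ∃ w, c w = c v := ⟨v, rfl⟩
      rw [hg]
      simp only [dif_pos hex]
      exact hrefine _ _ hex.choose_spec
    have key : ∀ T : Finset X1,
        (∑ v : X1, if kappa f p v = T then q v else 0) =
          ∑ σ ∈ Finset.univ.filter (fun σ => g σ = T),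
            ∑ v : X1, if c v = σ then q v else 0 := by
      intro T
      rw [Finset.sum_comm]
      refine Finset.sum_congr rfl fun v _ => ?_
      rw [Finset.sum_ite_eq (Finset.univ.filter (fun σ => g σ = T)) (c v) (fun _ => q v)]
      simp [hgc v]
    calc colorEntropy q (kappa f p)
        = ∑ T : Finset X1, Real.negMulLog
            (∑ σ ∈ Finset.univ.filter (fun σ => g σ = T),
              ∑ v : X1, if c v = σ then q v else 0) := by
          unfold colorEntropy
          exact Finset.sum_congr rfl fun T _ => by rw [← key T]
      _ ≤ ∑ T : Finset X1, ∑ σ ∈ Finset.univ.filter (fun σ => g σ = T),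
            Real.negMulLog (∑ v : X1, if c v = σ then q v else 0) := by
          refine Finset.sum_le_sum fun T _ => ?_
          refine negMulLog_sum_le' _ _ fun σ _ => ?_
          exact Finset.sum_nonneg fun v _ => by split_ifs; exacts [hq0 v, le_rfl]
      _ = colorEntropy q c := by
          unfold colorEntropy
          exact Finset.sum_fiberwise _ _ _
end

section
/- Suppose each c_i : 𝒳 i → C_i is a proper coloring of the characteristic graph G_i and the colorings c_1, …, c_k satisfy the coloring connectivity condition (C.C.C.). Then there exists a function f̂ : (Π i, C_i) → 𝒵 such that f̂ (fun i ↦ c_i (x i)) = f x for every admissible point x. -/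
/-- The characteristic graph `G_i` of the `i`-th source with respect to the other sources,
the joint weights `p`, and the function `f`: distinct `a, b : 𝒳 i` are adjacent iff there is
an admissible point `x` with `x i = a` such that `Function.update x i b` is also admissible
and `f` takes different values at the two points. -/
def charGraphI {k : ℕ} {𝒳 : Fin k → Type*} {Z : Type*}
    (f : (∀ i, 𝒳 i) → Z) (p : (∀ i, 𝒳 i) → ℝ) (i : Fin k) : SimpleGraph (𝒳 i) where
  Adj a b := a ≠ b ∧ ∃ x : ∀ j, 𝒳 j, x i = a ∧ 0 < p x ∧ 0 < p (Function.update x i b) ∧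
      f x ≠ f (Function.update x i b)
  symm := by
    refine ⟨?_⟩
    rintro a b ⟨hab, x, hxi, hpx, hpx', hf⟩
    have h1 : Function.update (Function.update x i b) i a = x := by
      rw [Function.update_idem, ← hxi, Function.update_eq_self]
    refine ⟨hab.symm, Function.update x i b, by simp, hpx', ?_, ?_⟩
    · rw [h1]; exact hpx
    · rw [h1]; exact hf.symm
  loopless := by
    refine ⟨?_⟩
    rintro a ⟨h, -⟩
    exact h rfl

/-- Two points differ in exactly one coordinate. -/
def DifferAtOne {k : ℕ} {𝒳 : Fin k → Type*} (x x' : ∀ i, 𝒳 i) : Prop :=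
  ∃ i, x i ≠ x' i ∧ ∀ j, j ≠ i → x j = x' j

/-- A path within a joint coloring class from `x` to `x'`: a finite sequence of admissible
points starting at `x` and ending at `x'`, all having the same color tuple as `x`, in which
any two consecutive points differ in exactly one coordinate. -/
def JointClassPath {k : ℕ} {𝒳 : Fin k → Type*} {C : Fin k → Type*}
    (p : (∀ i, 𝒳 i) → ℝ) (c : ∀ i, 𝒳 i → C i) (x x' : ∀ i, 𝒳 i) : Prop :=
  ∃ (m : ℕ) (w : Fin (m + 1) → ∀ i, 𝒳 i),
    w 0 = x ∧ w (Fin.last m) = x' ∧ (∀ t, 0 < p (w t)) ∧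
    (∀ t i, c i (w t i) = c i (x i)) ∧
    ∀ t : Fin m, DifferAtOne (w t.castSucc) (w t.succ)


/-- The colorings `c i` satisfy the coloring connectivity condition (C.C.C.): any two
admissible points in the same joint coloring class either have the same `f`-value or are
joined by a path within that joint coloring class. -/
def CCC {k : ℕ} {𝒳 : Fin k → Type*} {Z : Type*} {C : Fin k → Type*}
    (f : (∀ i, 𝒳 i) → Z) (p : (∀ i, 𝒳 i) → ℝ) (c : ∀ i, 𝒳 i → C i) : Prop :=
  ∀ x x' : ∀ i, 𝒳 i, 0 < p x → 0 < p x' → (∀ i, c i (x i) = c i (x' i)) →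
    f x = f x' ∨ JointClassPath p c x x'

/-- If each `c i` is a proper coloring of the characteristic graph `G_i` and the colorings
satisfy C.C.C., then there is a function `f̂` on color tuples which recovers `f` at every
admissible point. -/
theorem stmt10 {k : ℕ} (hk : 0 < k) {𝒳 : Fin k → Type*} [∀ i, Fintype (𝒳 i)]
    [∀ i, Nonempty (𝒳 i)] {Z : Type*} {C : Fin k → Type*}
    (f : (∀ i, 𝒳 i) → Z) (p : (∀ i, 𝒳 i) → ℝ) (hp : ∀ x, 0 ≤ p x)
    (c : ∀ i, 𝒳 i → C i)
    (hc : ∀ i, ∀ a b, (charGraphI f p i).Adj a b → c i a ≠ c i b)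
    (hccc : CCC f p c) :
    ∃ fhat : (∀ i, C i) → Z, ∀ x : ∀ i, 𝒳 i, 0 < p x →
      fhat (fun i => c i (x i)) = f x := by
  classical
  -- Step 1: consecutive points on a path have equal f-values.
  have step : ∀ x x' : ∀ i, 𝒳 i, 0 < p x → 0 < p x' →
      (∀ i, c i (x i) = c i (x' i)) → DifferAtOne x x' → f x = f x' := by
    rintro x x' hx hx' hcol ⟨i, hne, hrest⟩
    by_contra hf
    have hupd : Function.update x i (x' i) = x' := by
      funext j
      by_cases hj : j = i
      · subst hj; simp
      · rw [Function.update_of_ne hj]; exact hrest j hj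
    have hadj : (charGraphI f p i).Adj (x i) (x' i) := by
      refine ⟨hne, x, rfl, hx, ?_, ?_⟩
      · rw [hupd]; exact hx'
      · rw [hupd]; exact hf
    exact hc i _ _ hadj (hcol i)
  -- Step 2: f is constant on each joint coloring class.
  have key : ∀ x x' : ∀ i, 𝒳 i, 0 < p x → 0 < p x' →
      (∀ i, c i (x i) = c i (x' i)) → f x = f x' := by
    intro x x' hx hx' hcol
    rcases hccc x x' hx hx' hcol with h | ⟨m, w, hw0, hwl, hadm, hwc, hd⟩
    · exact h
    · have hconst : ∀ t : Fin (m + 1), f (w t) = f (w 0) := by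
        intro t
        induction t using Fin.induction with
        | zero => rfl
        | succ t ih =>
          rw [← ih]
          refine (step _ _ (hadm _) (hadm _) ?_ (hd t)).symm
          intro i
          rw [hwc t.castSucc i, hwc t.succ i]
      rw [← hw0, ← hwl, hconst (Fin.last m)]
  -- Step 3: define fhat by choice.
  have hZ : Nonempty Z := ⟨f (fun i => Classical.arbitrary (𝒳 i))⟩
  refine ⟨fun y => if h : ∃ x : ∀ i, 𝒳 i, 0 < p x ∧ (fun i => c i (x i)) = y
      then f h.choose else Classical.arbitrary Z, ?_⟩
  intro x hx
  have hex : ∃ x' : ∀ i, 𝒳 i, 0 < p x' ∧ (fun i => c i (x' i)) = fun i => c i (x i) :=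
    ⟨x, hx, rfl⟩
  simp only [dif_pos hex]
  exact key _ _ hex.choose_spec.1 hx (fun i => congrFun hex.choose_spec.2 i)
end

section
/- Suppose p x y > 0 for all x ∈ 𝒳₁ and y ∈ 𝒳₂ (full support). If c₁ : 𝒳₁ → C₁ is a proper coloring of the characteristic graph G_{X₁} and c₂ : 𝒳₂ → C₂ is a proper coloring of the characteristic graph G_{X₂}, then the map (a, b) ↦ (c₁ a, c₂ b) is a proper coloring of the joint characteristic graph G_{X₁,X₂}; that is, any pair of colorings of G_{X₁} and G_{X₂} can be viewed as a coloring of G_{X₁,X₂}. -/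
/-- The characteristic graph `G_{X₂}` of `X₂` with respect to `X₁`, `p`, and `f`. -/
def charGraph2 {X1 X2 Z : Type*} (f : X1 → X2 → Z) (p : X1 → X2 → ℝ) : SimpleGraph X2 where
  Adj b b' := b ≠ b' ∧ ∃ x, 0 < p x b ∧ 0 < p x b' ∧ f x b ≠ f x b'
  symm := by
    constructor
    rintro b b' ⟨hne, x, h1, h2, h3⟩
    exact ⟨hne.symm, x, h2, h1, h3.symm⟩
  loopless := by
    constructor
    rintro b ⟨h, -⟩
    exact h rfl

/-- The characteristic graph `G_{X₁,X₂}` of the joint source `(X₁, X₂)` with respect to `f`: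
distinct pairs `(a, b)` and `(a', b')` are adjacent iff `f a b ≠ f a' b'`. -/
def jointCharGraph {X1 X2 Z : Type*} (f : X1 → X2 → Z) : SimpleGraph (X1 × X2) where
  Adj q q' := q ≠ q' ∧ f q.1 q.2 ≠ f q'.1 q'.2
  symm := by
    constructor
    rintro q q' ⟨hne, h⟩
    exact ⟨hne.symm, h.symm⟩
  loopless := by
    constructor
    rintro q ⟨h, -⟩
    exact h rfl

/-- Under full support, a pair of proper colorings of `G_{X₁}` and `G_{X₂}` yields a proper
coloring `(a, b) ↦ (c₁ a, c₂ b)` of the joint characteristic graph `G_{X₁,X₂}`. -/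
theorem stmt15 {X1 X2 Z C₁ C₂ : Type*} [Fintype X1] [Nonempty X1] [Fintype X2] [Nonempty X2]
    (f : X1 → X2 → Z) (p : X1 → X2 → ℝ) (hp : ∀ x y, 0 < p x y)
    (c₁ : X1 → C₁) (hc₁ : ∀ a b, (charGraph f p).Adj a b → c₁ a ≠ c₁ b)
    (c₂ : X2 → C₂) (hc₂ : ∀ b b', (charGraph2 f p).Adj b b' → c₂ b ≠ c₂ b') :
    ∀ q q' : X1 × X2, (jointCharGraph f).Adj q q' →
      (c₁ q.1, c₂ q.2) ≠ (c₁ q'.1, c₂ q'.2) := by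
  rintro ⟨a, b⟩ ⟨a', b'⟩ ⟨hne, hf⟩
  simp only [ne_eq, Prod.mk.injEq, not_and]
  intro h1 h2
  by_cases hfa : f a b = f a' b
  · have hbb' : b ≠ b' := by rintro rfl; exact hf hfa
    exact hc₂ b b' ⟨hbb', a', hp a' b, hp a' b', hfa ▸ hf⟩ h2
  · have haa' : a ≠ a' := by rintro rfl; exact hfa rfl
    exact hc₁ a a' ⟨haa', b, hp a b, hp a' b, hfa⟩ h1
end
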